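/- Let f(z) = β + iπν(−∞) + ∫_ℝ log(√(1+t²)/(t−z)) dν(t) with β ∈ ℝ and ν non-decreasing with values in [0,1]. If ν satisfies ν(x) = (ν(x+0)+ν(x−0))/2 at every x, then for every x ∈ ℝ, lim_{y↓0} Im f(x+iy) = πν(x). -/

import Mathlib

open MeasureTheory Complex Filter Function

lemma impos (z : ℂ) (hz : 0 < z.im) (t : ℝ) :
    0 < ((Real.sqrt (1 + t ^ 2) : ℂ) / ((t : ℂ) - z)).im := by
  set d : ℂ := (t : ℂ) - z with hd
  have hdim : d.im = -z.im := by simp [hd]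
  have hd0 : d ≠ 0 := fun h => by rw [h] at hdim; simp at hdim; linarith
  have hN : 0 < Complex.normSq d := Complex.normSq_pos.2 hd0
  have hs : 0 < Real.sqrt (1 + t ^ 2) := Real.sqrt_pos.2 (by positivity)
  have : ((Real.sqrt (1 + t ^ 2) : ℂ) / d).im
      = Real.sqrt (1 + t ^ 2) * (z.im / Complex.normSq d) := by
    rw [div_eq_mul_inv, Complex.im_ofReal_mul, Complex.inv_im, hdim]
    ring
  rw [this]; positivity

lemma contC (z : ℂ) (hz : 0 < z.im) :
    Continuous (fun t : ℝ => Complex.log ((Real.sqrt (1 + t ^ 2) : ℂ) / ((t : ℂ) - z))) := by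
  have hinner : Continuous (fun t : ℝ => (Real.sqrt (1 + t ^ 2) : ℂ) / ((t : ℂ) - z)) := by
    apply Continuous.div
    · exact Complex.continuous_ofReal.comp (Real.continuous_sqrt.comp (by continuity))
    · continuity
    · intro t h
      have : ((t : ℂ) - z).im = -z.im := by simp
      rw [h] at this; simp at this; linarith
  exact hinner.clog fun t => Complex.mem_slitPlane_iff.2 (Or.inr (impos z hz t).ne')

lemma boundC (z : ℂ) (hz : 0 < z.im) : ∃ C : ℝ, ∀ t : ℝ,
    ‖Complex.log ((Real.sqrt (1 + t ^ 2) : ℂ) / ((t : ℂ) - z))‖ ≤ C := by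
  set K := ‖z‖ with hK
  have hK0 : 0 ≤ K := norm_nonneg z
  have hy : 0 < z.im := hz
  set L : ℝ := (1 + K)⁻¹ with hL
  set U : ℝ := 1 + (1 + K) / z.im with hU
  have hLpos : 0 < L := by positivity
  have hUpos : 0 < U := by positivity
  refine ⟨|Real.log L| + |Real.log U| + Real.pi, fun t => ?_⟩
  set s := Real.sqrt (1 + t ^ 2) with hs
  have hs0 : 0 < s := Real.sqrt_pos.2 (by positivity)
  have hs1 : 1 ≤ s := Real.one_le_sqrt.2 (by nlinarith)
  have hst : |t| ≤ s := by
    rw [hs, ← Real.sqrt_sq_eq_abs]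
    exact Real.sqrt_le_sqrt (by nlinarith)
  have hsub : s ≤ 1 + |t| := by
    rw [hs]
    have h2 : Real.sqrt (1 + t ^ 2) ≤ Real.sqrt ((1 + |t|) ^ 2) := by
      apply Real.sqrt_le_sqrt; nlinarith [abs_nonneg t, _root_.sq_abs t]
    simpa [Real.sqrt_sq (by positivity : (0:ℝ) ≤ 1 + |t|)] using h2
  set d : ℂ := (t : ℂ) - z with hd
  have hdim : d.im = -z.im := by simp [hd]
  have hd0 : d ≠ 0 := fun h => by rw [h] at hdim; simp at hdim; linarith
  set A := ‖d‖ with hA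
  have hApos : 0 < A := norm_pos_iff.2 hd0
  have hAy : z.im ≤ A := by
    have h3 := Complex.abs_im_le_norm d
    rw [hdim] at h3
    rw [hA]; exact le_of_abs_le (by simpa [abs_neg] using h3)
  have hAle : A ≤ |t| + K := by
    have h4 := norm_add_le (t : ℂ) (-z)
    rw [hA, hd]
    simpa [sub_eq_add_neg, Complex.norm_real, Real.norm_eq_abs, norm_neg] using h4
  have htle : |t| ≤ A + K := by
    have h5 : (t : ℂ) = d + z := by rw [hd]; ring
    calc |t| = ‖(t : ℂ)‖ := by simp
    _ ≤ A + K := by rw [h5]; exact norm_add_le _ _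
  set w : ℂ := (s : ℂ) / d with hw
  have habsw : ‖w‖ = s / A := by
    rw [hw, norm_div, Complex.norm_real, Real.norm_eq_abs, _root_.abs_of_nonneg hs0.le]
  have hlow : L ≤ ‖w‖ := by
    rw [habsw, hL, le_div_iff₀ hApos, inv_mul_le_iff₀ (by positivity)]
    nlinarith
  have hupp : ‖w‖ ≤ U := by
    rw [habsw, div_le_iff₀ hApos]
    have h6 : (1 + K) * z.im ≤ (1 + K) * A := by nlinarith
    have h7 : 1 + K ≤ (1 + K) / z.im * A := by
      rw [div_mul_eq_mul_div, le_div_iff₀ hy]; nlinarith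
    rw [hU]; nlinarith
  have hlog1 : Real.log L ≤ Real.log ‖w‖ := Real.log_le_log hLpos hlow
  have hlog2 : Real.log ‖w‖ ≤ Real.log U := Real.log_le_log (lt_of_lt_of_le hLpos hlow) hupp
  have habslog : |Real.log ‖w‖| ≤ |Real.log L| + |Real.log U| := by
    rw [abs_le]
    constructor
    · have := neg_abs_le (Real.log L)
      have := abs_nonneg (Real.log U)
      linarith
    · have := le_abs_self (Real.log U)
      have := abs_nonneg (Real.log L)
      linarith
  calc ‖Complex.log w‖
      ≤ |(Complex.log w).re| + |(Complex.log w).im| := Complex.norm_le_abs_re_add_abs_im _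
    _ ≤ (|Real.log L| + |Real.log U|) + Real.pi := by
        rw [Complex.log_re, Complex.log_im]
        exact add_le_add habslog (Complex.abs_arg_le_pi w)
    _ = |Real.log L| + |Real.log U| + Real.pi := by ring

lemma argA {w : ℂ} (hw : 0 < w.im) :
    Complex.arg w = Real.pi / 2 - Real.arctan (w.re / w.im) := by
  have hw0 : w ≠ 0 := fun h => by simp [h] at hw
  have h1 : 0 < Complex.arg w := by
    rcases lt_or_eq_of_le (Complex.arg_nonneg_iff.2 hw.le) with h | h
    · exact h
    · exact absurd ((Complex.arg_eq_zero_iff.1 h.symm).2) hw.ne'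
  have h2 : Complex.arg w < Real.pi :=
    Complex.arg_lt_pi_iff.2 (Or.inr hw.ne')
  have habs : ‖w‖ ≠ 0 := norm_ne_zero_iff.2 hw0
  have ht : Real.tan (Real.pi / 2 - Complex.arg w) = w.re / w.im := by
    rw [Real.tan_pi_div_two_sub, Real.tan_eq_sin_div_cos, Complex.sin_arg,
      Complex.cos_arg hw0, inv_div]
    field_simp
  have := Real.arctan_tan (x := Real.pi / 2 - Complex.arg w) (by linarith) (by linarith)
  rw [ht] at this
  linarith

lemma imB (x t : ℝ) {y : ℝ} (hy : 0 < y) :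
    (Complex.log ((Real.sqrt (1 + t ^ 2) : ℂ) / ((t : ℂ) - ((x : ℂ) + (y : ℂ) * Complex.I)))).im
      = Real.pi / 2 - Real.arctan ((t - x) / y) := by
  set d : ℂ := (t : ℂ) - ((x : ℂ) + (y : ℂ) * Complex.I) with hd
  have hdre : d.re = t - x := by simp [hd]
  have hdim : d.im = -y := by simp [hd]
  have hd0 : d ≠ 0 := fun h => by rw [h] at hdim; simp at hdim; linarith
  have hN : 0 < Complex.normSq d := Complex.normSq_pos.2 hd0
  have hs : 0 < Real.sqrt (1 + t ^ 2) := Real.sqrt_pos.2 (by positivity)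
  set w : ℂ := (Real.sqrt (1 + t ^ 2) : ℂ) / d with hw
  have hwre : w.re = Real.sqrt (1 + t ^ 2) * ((t - x) / Complex.normSq d) := by
    rw [hw, div_eq_mul_inv, Complex.re_ofReal_mul, Complex.inv_re, hdre]
  have hwim : w.im = Real.sqrt (1 + t ^ 2) * (y / Complex.normSq d) := by
    rw [hw, div_eq_mul_inv, Complex.im_ofReal_mul, Complex.inv_im, hdim]
    ring
  have hwimpos : 0 < w.im := by rw [hwim]; positivity
  rw [Complex.log_im, argA hwimpos, hwre, hwim]
  congr 2
  field_simp

theorem stmt_14 (ν : ℝ → ℝ) (hmono : Monotone ν)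
    (hrange : ∀ x, ν x ∈ Set.Icc (0 : ℝ) 1)
    (hmid : ∀ x, ν x = (Function.rightLim ν x + Function.leftLim ν x) / 2)
    (μ : Measure ℝ) [IsFiniteMeasure μ]
    (hμ : ∀ a b : ℝ, a < b →
      μ (Set.Ioo a b) = ENNReal.ofReal (Function.leftLim ν b - Function.rightLim ν a))
    (β c : ℝ) (hc : Tendsto ν atBot (nhds c))
    (f : ℂ → ℂ)
    (hf : ∀ z : ℂ, 0 < z.im →
      f z = (β : ℂ) + Complex.I * Real.pi * (c : ℂ) +
        ∫ t : ℝ, Complex.log ((Real.sqrt (1 + t ^ 2) : ℂ) / ((t : ℂ) - z)) ∂μ) :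
    ∀ x : ℝ, Tendsto (fun y : ℝ => (f ((x : ℂ) + (y : ℂ) * Complex.I)).im)
      (nhdsWithin 0 (Set.Ioi 0)) (nhds (Real.pi * ν x)) := by
  intro x
  have hLle : Function.leftLim ν x ≤ ν x := hmono.leftLim_le le_rfl
  have hRge : ν x ≤ Function.rightLim ν x := hmono.le_rightLim le_rfl
  have hcle : ∀ t : ℝ, c ≤ ν t := fun t =>
    le_of_tendsto hc (eventually_atBot.2 ⟨t, fun s hs => hmono hs⟩)
  -- rightLim at -infty tends to c
  have hbot : Tendsto (fun n : ℕ => x - ((n : ℝ) + 1)) atTop atBot := by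
    have h1 : Tendsto (fun n : ℕ => ((n : ℝ) + 1)) atTop atTop :=
      tendsto_atTop_add_const_right _ 1 tendsto_natCast_atTop_atTop
    simpa [sub_eq_add_neg] using tendsto_atBot_add_const_left atTop x
      (tendsto_neg_atTop_atBot.comp h1)
  have hbot' : Tendsto (fun n : ℕ => x - (n : ℝ)) atTop atBot := by
    simpa [sub_eq_add_neg] using tendsto_atBot_add_const_left atTop x
      (tendsto_neg_atTop_atBot.comp tendsto_natCast_atTop_atTop)
  have hRtendsto : Tendsto (fun n : ℕ => Function.rightLim ν (x - ((n : ℝ) + 1))) atTop (nhds c) := by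
    apply tendsto_of_tendsto_of_tendsto_of_le_of_le (hc.comp hbot) (hc.comp hbot')
    · exact fun n => hmono.le_rightLim le_rfl
    · intro n
      have : x - ((n : ℝ) + 1) < x - (n : ℝ) := by linarith
      exact hmono.rightLim_le this
  -- measure of Iio x
  have hIio : μ (Set.Iio x) = ENNReal.ofReal (Function.leftLim ν x - c) := by
    have hUnion : Set.Iio x = ⋃ n : ℕ, Set.Ioo (x - ((n : ℝ) + 1)) x := by
      ext t
      simp only [Set.mem_Iio, Set.mem_iUnion, Set.mem_Ioo]
      constructor
      · intro ht
        obtain ⟨n, hn⟩ := exists_nat_gt (x - t)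
        exact ⟨n, by linarith, ht⟩
      · rintro ⟨n, _, h⟩; exact h
    have hmonoS : Monotone fun n : ℕ => Set.Ioo (x - ((n : ℝ) + 1)) x := by
      intro m n hmn
      have : (m : ℝ) ≤ n := Nat.cast_le.2 hmn
      exact Set.Ioo_subset_Ioo (by linarith) le_rfl
    have h1 := tendsto_measure_iUnion_atTop (μ := μ) hmonoS
    rw [← hUnion] at h1
    have h2 : Tendsto (fun n : ℕ => μ (Set.Ioo (x - ((n : ℝ) + 1)) x)) atTop
        (nhds (ENNReal.ofReal (Function.leftLim ν x - c))) := by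
      have heq : (fun n : ℕ => μ (Set.Ioo (x - ((n : ℝ) + 1)) x))
          = fun n : ℕ => ENNReal.ofReal
            (Function.leftLim ν x - Function.rightLim ν (x - ((n : ℝ) + 1))) := by
        funext n
        exact hμ _ _ (by have : (0:ℝ) ≤ n := Nat.cast_nonneg n; linarith)
      rw [heq]
      exact (ENNReal.continuous_ofReal.tendsto _).comp (tendsto_const_nhds.sub hRtendsto)
    exact tendsto_nhds_unique h1 h2
  -- measure of {x}
  have hsingle : μ {x} = ENNReal.ofReal (Function.rightLim ν x - Function.leftLim ν x) := by
    have hxa : x - 1 < x := by linarith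
    have hxb : x < x + 1 := by linarith
    have hset : Set.Ioo (x - 1) (x + 1) = (Set.Ioo (x - 1) x ∪ {x}) ∪ Set.Ioo x (x + 1) := by
      ext t
      simp only [Set.mem_Ioo, Set.mem_union, Set.mem_singleton_iff]
      constructor
      · rintro ⟨h1, h2⟩
        rcases lt_trichotomy t x with h | h | h
        · exact Or.inl (Or.inl ⟨h1, h⟩)
        · exact Or.inl (Or.inr h)
        · exact Or.inr ⟨h, h2⟩
      · rintro ((⟨h1, h2⟩ | rfl) | ⟨h1, h2⟩) <;> constructor <;> linarith
    have hdisj1 : Disjoint (Set.Ioo (x - 1) x) ({x} : Set ℝ) := by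
      simp [Set.disjoint_singleton_right]
    have hdisj2 : Disjoint (Set.Ioo (x - 1) x ∪ {x}) (Set.Ioo x (x + 1)) := by
      rw [Set.disjoint_left]
      rintro t ht ⟨h1, _⟩
      rcases ht with ⟨_, h⟩ | h
      · linarith
      · rw [Set.mem_singleton_iff] at h; subst h; linarith
    have hm : μ (Set.Ioo (x - 1) (x + 1))
        = μ (Set.Ioo (x - 1) x) + μ {x} + μ (Set.Ioo x (x + 1)) := by
      rw [hset, measure_union hdisj2 measurableSet_Ioo,
        measure_union hdisj1 (measurableSet_singleton x)]
    have hfin : μ {x} ≠ ⊤ := (measure_lt_top μ _).ne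
    set m := (μ {x}).toReal with hmdef
    have hm0 : 0 ≤ m := ENNReal.toReal_nonneg
    have hμx : μ {x} = ENNReal.ofReal m := (ENNReal.ofReal_toReal hfin).symm
    have hRa : Function.rightLim ν (x - 1) ≤ Function.leftLim ν x := hmono.rightLim_le_leftLim hxa
    have hRb : Function.rightLim ν x ≤ Function.leftLim ν (x + 1) := hmono.rightLim_le_leftLim hxb
    rw [hμ _ _ (by linarith : x - 1 < x + 1), hμ _ _ hxa, hμ _ _ hxb, hμx,
      ← ENNReal.ofReal_add (by linarith) hm0, ← ENNReal.ofReal_add (by linarith) (by linarith)] at hm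
    rw [ENNReal.ofReal_eq_ofReal_iff (by linarith) (by linarith)] at hm
    rw [hμx]
    congr 1
    linarith
  -- integral of limit function
  set g : ℝ → ℝ := fun t => if t < x then Real.pi else if t = x then Real.pi / 2 else 0 with hg
  have hgint : ∫ t, g t ∂μ = Real.pi * (Function.leftLim ν x - c)
      + Real.pi / 2 * (Function.rightLim ν x - Function.leftLim ν x) := by
    have hgeq : g = fun t => (Set.Iio x).indicator (fun _ => Real.pi) t
        + ({x} : Set ℝ).indicator (fun _ => Real.pi / 2) t := by
      funext t
      simp only [hg, Set.indicator_apply, Set.mem_Iio, Set.mem_singleton_iff]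
      split_ifs <;> simp_all <;> linarith
    rw [hgeq, integral_add ((integrable_const Real.pi).indicator measurableSet_Iio)
      ((integrable_const (Real.pi / 2)).indicator (measurableSet_singleton x)),
      integral_indicator_const _ measurableSet_Iio,
      integral_indicator_const _ (measurableSet_singleton x), measureReal_def, measureReal_def, hIio, hsingle,
      ENNReal.toReal_ofReal (by linarith [hcle (x - 1), hmono.le_leftLim (show x - 1 < x by linarith)]),
      ENNReal.toReal_ofReal (by linarith), smul_eq_mul, smul_eq_mul]
    ring
  -- dominated convergence
  have hdom : Tendsto (fun y : ℝ => ∫ t, (Real.pi / 2 - Real.arctan ((t - x) / y)) ∂μ)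
      (nhdsWithin 0 (Set.Ioi 0)) (nhds (∫ t, g t ∂μ)) := by
    apply tendsto_integral_filter_of_dominated_convergence (fun _ => Real.pi)
    · filter_upwards with y
      apply Continuous.aestronglyMeasurable
      exact continuous_const.sub (Real.continuous_arctan.comp
        ((continuous_id.sub continuous_const).div_const y))
    · filter_upwards with y
      apply ae_of_all
      intro t
      have h1 := Real.arctan_lt_pi_div_two ((t - x) / y)
      have h2 := Real.neg_pi_div_two_lt_arctan ((t - x) / y)
      rw [Real.norm_eq_abs, abs_le]
      constructor <;> linarith [Real.pi_pos]
    · exact integrable_const _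
    · apply ae_of_all
      intro t
      rcases lt_trichotomy t x with h | h | h
      · have hgt : g t = Real.pi := by simp [hg, h]
        rw [hgt]
        have hA : Tendsto (fun y : ℝ => (t - x) / y) (nhdsWithin 0 (Set.Ioi 0)) atBot := by
          simp only [div_eq_mul_inv]
          exact (tendsto_const_mul_atBot_of_neg (by linarith)).2 tendsto_inv_nhdsGT_zero
        have hB : Tendsto (fun y : ℝ => Real.arctan ((t - x) / y))
            (nhdsWithin 0 (Set.Ioi 0)) (nhds (-(Real.pi / 2))) :=
          (Real.tendsto_arctan_atBot.mono_right nhdsWithin_le_nhds).comp hA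
        have := hB.const_sub (Real.pi / 2)
        simpa [sub_neg_eq_add, add_halves] using this
      · subst h
        have hgt : g t = Real.pi / 2 := by simp [hg]
        rw [hgt]
        have heq : (fun y : ℝ => Real.pi / 2 - Real.arctan ((t - t) / y))
            = fun _ : ℝ => Real.pi / 2 := by
          funext y; simp
        rw [heq]
        exact tendsto_const_nhds
      · have hgt : g t = 0 := by simp [hg, not_lt.2 h.le, h.ne']
        rw [hgt]
        have hA : Tendsto (fun y : ℝ => (t - x) / y) (nhdsWithin 0 (Set.Ioi 0)) atTop := by
          simp only [div_eq_mul_inv]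
          exact (tendsto_const_mul_atTop_of_pos (by linarith)).2 tendsto_inv_nhdsGT_zero
        have hB : Tendsto (fun y : ℝ => Real.arctan ((t - x) / y))
            (nhdsWithin 0 (Set.Ioi 0)) (nhds (Real.pi / 2)) :=
          (Real.tendsto_arctan_atTop.mono_right nhdsWithin_le_nhds).comp hA
        have := hB.const_sub (Real.pi / 2)
        simpa using this
  -- identify Im f with the arctan integral for y > 0
  have key : ∀ᶠ (y : ℝ) in nhdsWithin (0 : ℝ) (Set.Ioi 0),
      (f ((x : ℂ) + (y : ℂ) * Complex.I)).im
        = Real.pi * c + ∫ t, (Real.pi / 2 - Real.arctan ((t - x) / y)) ∂μ := by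
    filter_upwards [self_mem_nhdsWithin] with y hy
    have hy0 : 0 < y := hy
    have him : 0 < ((x : ℂ) + (y : ℂ) * Complex.I).im := by simp [hy0]
    rw [hf _ him]
    have hint : Integrable (fun t : ℝ => Complex.log ((Real.sqrt (1 + t ^ 2) : ℂ)
        / ((t : ℂ) - ((x : ℂ) + (y : ℂ) * Complex.I)))) μ := by
      obtain ⟨C, hC⟩ := boundC _ him
      exact (integrable_const C).mono' ((contC _ him).aestronglyMeasurable)
        (ae_of_all _ fun t => by simpa using hC t)
    rw [Complex.add_im]
    have h1 : ((β : ℂ) + Complex.I * (Real.pi : ℂ) * (c : ℂ)).im = Real.pi * c := by simp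
    rw [h1]
    congr 1
    have h2 := ContinuousLinearMap.integral_comp_comm Complex.imCLM hint
    simp only [Complex.imCLM_apply] at h2
    rw [← h2]
    exact integral_congr_ae (ae_of_all _ fun t => imB x t hy0)
  have hfinal := hdom.const_add (Real.pi * c)
  have hval : Real.pi * c + ∫ t, g t ∂μ = Real.pi * ν x := by
    rw [hgint, hmid x]; ring
  rw [hval] at hfinal
  exact hfinal.congr' (key.mono fun y h => h.symm)
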